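/- Let N, t, m₀ be positive real numbers, H = 2N/(2N + m₀·t), and f(x) = m₀·H / (exp(x/t) − (1 − H)). Then for all x ≥ 0, f(x) ≤ 2·N·m₀ / (2·N + m₀·x). -/

import Mathlib

open Real

theorem stmt_4 (N t m₀ : ℝ) (hN : 0 < N) (ht : 0 < t) (hm : 0 < m₀)
    (H : ℝ) (hH : H = 2 * N / (2 * N + m₀ * t))
    (f : ℝ → ℝ) (hf : ∀ x, f x = m₀ * H / (Real.exp (x / t) - (1 - H))) :
    ∀ x ≥ (0 : ℝ), f x ≤ 2 * N * m₀ / (2 * N + m₀ * x) := by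
  subst hH
  intro x hx
  have hS : 0 < 2 * N + m₀ * t := by positivity
  have hSne : (2 * N + m₀ * t) ≠ 0 := ne_of_gt hS
  have hxt : 0 ≤ x / t := by positivity
  have hexp : x / t + 1 ≤ Real.exp (x / t) := Real.add_one_le_exp _
  have hHpos : 0 < 2 * N / (2 * N + m₀ * t) := by positivity
  have hD : 0 < Real.exp (x / t) - (1 - 2 * N / (2 * N + m₀ * t)) := by
    have h1 : 1 ≤ Real.exp (x / t) := Real.one_le_exp hxt
    linarith
  have hDen2 : 0 < 2 * N + m₀ * x := by positivity
  rw [hf x, div_le_div_iff₀ hD hDen2]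
  have key : 2 * N + m₀ * x + m₀ * t ≤ (2 * N + m₀ * t) * Real.exp (x / t) := by
    have h2 : (2 * N + m₀ * t) * (x / t + 1) ≤ (2 * N + m₀ * t) * Real.exp (x / t) :=
      mul_le_mul_of_nonneg_left hexp (le_of_lt hS)
    have h3 : m₀ * x ≤ (2 * N + m₀ * t) * (x / t) := by
      have h4 : m₀ ≤ (2 * N + m₀ * t) / t := by
        rw [le_div_iff₀ ht]; nlinarith
      have h5 : (2 * N + m₀ * t) * (x / t) = ((2 * N + m₀ * t) / t) * x := by ring
      rw [h5]
      exact mul_le_mul_of_nonneg_right h4 hx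
    nlinarith
  rw [← mul_le_mul_iff_of_pos_left hS]
  have expand : (2 * N + m₀ * t) * (m₀ * (2 * N / (2 * N + m₀ * t)) * (2 * N + m₀ * x))
      = m₀ * 2 * N * (2 * N + m₀ * x) := by
    have h6 : m₀ * (2 * N / (2 * N + m₀ * t)) * (2 * N + m₀ * x)
        = m₀ * 2 * N * (2 * N + m₀ * x) / (2 * N + m₀ * t) := by ring
    rw [h6, mul_comm, div_mul_cancel₀ _ hSne]
  have expand2 : (2 * N + m₀ * t) *
      (2 * N * m₀ * (Real.exp (x / t) - (1 - 2 * N / (2 * N + m₀ * t))))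
      = 2 * N * m₀ * ((2 * N + m₀ * t) * Real.exp (x / t) - m₀ * t) := by
    have h7 : (2 * N + m₀ * t) * (1 - 2 * N / (2 * N + m₀ * t)) = m₀ * t := by
      rw [mul_sub, mul_div_cancel₀ _ hSne]; ring
    calc (2 * N + m₀ * t) * (2 * N * m₀ * (Real.exp (x / t) - (1 - 2 * N / (2 * N + m₀ * t))))
        = 2 * N * m₀ * ((2 * N + m₀ * t) * Real.exp (x / t)
            - (2 * N + m₀ * t) * (1 - 2 * N / (2 * N + m₀ * t))) := by ring
      _ = _ := by rw [h7]
  rw [expand, expand2]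
  nlinarith [mul_le_mul_of_nonneg_left key (by positivity : (0:ℝ) ≤ 2 * N * m₀)]
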